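/- Let M ≥ 2 be an integer and γ ∈ ℝ. Let θ̃₀ : ℝ → ℝ be odd (θ̃₀(−ω) = −θ̃₀(ω) for all ω) and 2π-periodic, with θ̃₀(ω) = γω for all ω ∈ [0, 2π/M). Let α̃ : ℝ → ℝ satisfy: for every ω ∈ ℝ, α̃(ω + 2π/M) ≡ α̃(ω) (mod 2π). For |ω| < 2Mπ define β(ω) := ∑_{i=1}^{∞} θ̃₀(ω/M^{i}) (this series converges since θ̃₀ is linear on [0, 2π/M) and odd). Assume that for every ω with 0 < |ω| < 2Mπ one has α̃(ω/M) + β(ω) ≡ (π/2)·sign(ω) (mod 2π). Then there exists d ∈ ℤ such that: (i) γ = (d + 1/2)(M − 1); (ii) for every ω ∈ (0, 2π/M), α̃(ω) ≡ π/2 − (d + 1/2)Mω (mod 2π); and (iii) for every p ∈ {0, …, M−1} and every ω ∈ (2pπ/M, 2(p+1)π/M), θ̃₀(ω) ≡ (d + 1/2)(M − 1)ω − pπ (mod 2π). -/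

import Mathlib

open Real

set_option maxHeartbeats 1000000 in
/-- Proposition 2: under a linear-phase assumption on `θ₀` on `[0, 2π/M)` and
`2π/M`-periodicity (mod 2π) of `α`, the solutions of the M-band Hilbert phase
equation are uniquely determined modulo 2π. -/
theorem stmt_3 (M : ℕ) (hM : 2 ≤ M) (γ : ℝ) (θ₀ α β : ℝ → ℝ)
    (hodd : ∀ ω : ℝ, θ₀ (-ω) = -θ₀ ω)
    (hper : ∀ ω : ℝ, θ₀ (ω + 2 * π) = θ₀ ω)
    (hlin : ∀ ω : ℝ, 0 ≤ ω → ω < 2 * π / M → θ₀ ω = γ * ω)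
    (hαper : ∀ ω : ℝ, ∃ n : ℤ, α (ω + 2 * π / M) = α ω + 2 * π * n)
    (hβ : ∀ ω : ℝ, |ω| < 2 * M * π →
      HasSum (fun i : ℕ => θ₀ (ω / (M : ℝ) ^ (i + 1))) (β ω))
    (hmain : ∀ ω : ℝ, 0 < |ω| → |ω| < 2 * M * π →
      ∃ n : ℤ, α (ω / M) + β ω = π / 2 * Real.sign ω + 2 * π * n) :
    ∃ d : ℤ, γ = ((d : ℝ) + 1 / 2) * ((M : ℝ) - 1) ∧
      (∀ ω : ℝ, 0 < ω → ω < 2 * π / M →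
        ∃ n : ℤ, α ω = π / 2 - ((d : ℝ) + 1 / 2) * M * ω + 2 * π * n) ∧
      (∀ p : ℕ, p < M → ∀ ω : ℝ,
        2 * p * π / M < ω → ω < 2 * (p + 1) * π / M →
        ∃ n : ℤ, θ₀ ω = ((d : ℝ) + 1 / 2) * ((M : ℝ) - 1) * ω - p * π + 2 * π * n) := by
  have hMr : (2 : ℝ) ≤ (M : ℝ) := by exact_mod_cast hM
  have hM1 : (1 : ℝ) < (M : ℝ) := by linarith
  have hM0 : (0 : ℝ) < (M : ℝ) := by linarith
  have hMne : (M : ℝ) ≠ 0 := ne_of_gt hM0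
  have hMsub : (0 : ℝ) < (M : ℝ) - 1 := by linarith
  have hMsubne : (M : ℝ) - 1 ≠ 0 := ne_of_gt hMsub
  have hπ : (0 : ℝ) < π := Real.pi_pos
  -- the geometric series
  have hgeom : ∀ x : ℝ, HasSum (fun i : ℕ => γ * (x / (M : ℝ) ^ (i + 1)))
      (γ * x / ((M : ℝ) - 1)) := by
    intro x
    have hr0 : (0 : ℝ) ≤ 1 / (M : ℝ) := by positivity
    have hr1 : 1 / (M : ℝ) < 1 := by
      rw [div_lt_one hM0]; exact hM1
    have h := (hasSum_geometric_of_lt_one hr0 hr1).mul_left (γ * x * (1 / (M : ℝ)))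
    have heq : (fun i : ℕ => γ * x * (1 / (M : ℝ)) * (1 / (M : ℝ)) ^ i)
        = fun i : ℕ => γ * (x / (M : ℝ) ^ (i + 1)) := by
      funext i
      simp [div_eq_mul_inv, mul_inv, pow_succ, mul_pow]; ring
    rw [heq] at h
    convert h using 1
    have hne2 : 1 - 1 / (M : ℝ) ≠ 0 := sub_ne_zero.mpr (ne_of_lt hr1).symm
    · rfl
    rw [one_sub_div hMne, inv_div]
    field_simp
  -- value of β on (0, 2π)
  have hβval : ∀ ω : ℝ, 0 < ω → ω < 2 * π → β ω = γ * ω / ((M : ℝ) - 1) := by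
    intro ω h0 h2
    have habs : |ω| < 2 * M * π := by
      rw [abs_of_pos h0]; nlinarith
    have h := hβ ω habs
    have heq : (fun i : ℕ => θ₀ (ω / (M : ℝ) ^ (i + 1)))
        = fun i : ℕ => γ * (ω / (M : ℝ) ^ (i + 1)) := by
      funext i
      apply hlin
      · positivity
      · have h1 : (M : ℝ) ≤ (M : ℝ) ^ (i + 1) := le_self_pow₀ hM1.le (Nat.succ_ne_zero i)
        calc ω / (M : ℝ) ^ (i + 1) ≤ ω / (M : ℝ) := by
              apply div_le_div_of_nonneg_left h0.le hM0 h1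
          _ < 2 * π / (M : ℝ) := by gcongr
    rw [heq] at h
    exact h.unique (hgeom ω)
  -- value of β on (-2π, 0)
  have hβneg : ∀ ω : ℝ, 0 < ω → ω < 2 * π → β (-ω) = -(γ * ω / ((M : ℝ) - 1)) := by
    intro ω h0 h2
    have habs : |(-ω)| < 2 * M * π := by
      rw [abs_neg, abs_of_pos h0]; nlinarith
    have h := hβ (-ω) habs
    have heq : (fun i : ℕ => θ₀ (-ω / (M : ℝ) ^ (i + 1)))
        = fun i : ℕ => -(γ * (ω / (M : ℝ) ^ (i + 1))) := by
      funext i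
      rw [neg_div, hodd]
      congr 1
      apply hlin
      · positivity
      · have h1 : (M : ℝ) ≤ (M : ℝ) ^ (i + 1) := le_self_pow₀ hM1.le (Nat.succ_ne_zero i)
        calc ω / (M : ℝ) ^ (i + 1) ≤ ω / (M : ℝ) := by
              apply div_le_div_of_nonneg_left h0.le hM0 h1
          _ < 2 * π / (M : ℝ) := by gcongr
    rw [heq] at h
    exact h.unique ((hgeom ω).neg)
  -- β(Mω) = θ₀ ω + β ω
  have hβM : ∀ ω : ℝ, 0 < ω → ω < 2 * π → β ((M : ℝ) * ω) = θ₀ ω + β ω := by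
    intro ω h0 h2
    have habs : |(M : ℝ) * ω| < 2 * M * π := by
      rw [abs_of_pos (mul_pos hM0 h0)]; nlinarith
    have h := hβ ((M : ℝ) * ω) habs
    have heq : (fun i : ℕ => θ₀ ((M : ℝ) * ω / (M : ℝ) ^ (i + 1)))
        = fun i : ℕ => θ₀ (ω / (M : ℝ) ^ i) := by
      funext i
      congr 1
      rw [pow_succ']
      field_simp
    rw [heq] at h
    have habs2 : |ω| < 2 * M * π := by
      rw [abs_of_pos h0]; nlinarith
    have h2' := hβ ω habs2
    have h3 := (hasSum_nat_add_iff (f := fun i : ℕ => θ₀ (ω / (M : ℝ) ^ i)) 1).mp h2'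
    simp only [Finset.range_one, Finset.sum_singleton, pow_zero, div_one] at h3
    have := h.unique h3
    linarith
  -- find d
  have hπabs : 0 < |π| := by rw [abs_of_pos hπ]; exact hπ
  have hπlt : |π| < 2 * M * π := by rw [abs_of_pos hπ]; nlinarith
  obtain ⟨n₁, e₁⟩ := hmain π hπabs hπlt
  obtain ⟨n₂, e₂⟩ := hmain (-π) (by rwa [abs_neg]) (by rwa [abs_neg])
  rw [Real.sign_of_pos hπ, hβval π hπ (by linarith)] at e₁
  rw [Real.sign_of_neg (by linarith : -π < 0), hβneg π hπ (by linarith)] at e₂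
  obtain ⟨n₃, e₃⟩ := hαper (-π / (M : ℝ))
  have harg : -π / (M : ℝ) + 2 * π / (M : ℝ) = π / (M : ℝ) := by ring
  rw [harg] at e₃
  set d : ℤ := n₁ - n₂ - n₃ with hd
  have hγ : γ = ((d : ℝ) + 1 / 2) * ((M : ℝ) - 1) := by
    have key : γ * π / ((M : ℝ) - 1) + γ * π / ((M : ℝ) - 1)
        = π + 2 * π * ((d : ℝ)) := by
      push_cast [hd]
      linarith
    rw [← add_div, div_eq_iff hMsubne] at key
    have : γ * π = (((d : ℝ) + 1 / 2) * ((M : ℝ) - 1)) * π := by nlinarith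
    exact mul_right_cancel₀ (ne_of_gt hπ) this
  -- part (ii)
  have partii : ∀ ω : ℝ, 0 < ω → ω < 2 * π / M →
      ∃ n : ℤ, α ω = π / 2 - ((d : ℝ) + 1 / 2) * M * ω + 2 * π * n := by
    intro ω h0 h2
    have hMω0 : 0 < (M : ℝ) * ω := mul_pos hM0 h0
    have hMω2 : (M : ℝ) * ω < 2 * π := by
      rw [lt_div_iff₀ hM0] at h2; nlinarith [h2]
    obtain ⟨n, e⟩ := hmain ((M : ℝ) * ω) (by rw [abs_of_pos hMω0]; exact hMω0)
      (by rw [abs_of_pos hMω0]; nlinarith)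
    rw [Real.sign_of_pos hMω0, mul_div_cancel_left₀ ω hMne,
      hβval ((M : ℝ) * ω) hMω0 hMω2] at e
    refine ⟨n, ?_⟩
    have hβeq : γ * ((M : ℝ) * ω) / ((M : ℝ) - 1) = ((d : ℝ) + 1 / 2) * M * ω := by
      rw [hγ]; field_simp
    rw [hβeq] at e
    linarith
  -- iterated periodicity of α
  have hαiter : ∀ k : ℕ, ∀ x : ℝ, ∃ n : ℤ, α (x + 2 * π / M * k) = α x + 2 * π * n := by
    intro k
    induction k with
    | zero => intro x; exact ⟨0, by simp⟩
    | succ k ih =>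
      intro x
      obtain ⟨n, e⟩ := ih x
      obtain ⟨m, e2⟩ := hαper (x + 2 * π / M * k)
      refine ⟨n + m, ?_⟩
      have harg2 : x + 2 * π / M * ((k : ℕ) + 1 : ℕ) = (x + 2 * π / M * k) + 2 * π / M := by
        push_cast; ring
      rw [harg2, e2, e]
      push_cast; ring
  refine ⟨d, hγ, partii, ?_⟩
  -- part (iii)
  intro p hp ω h1 h2
  have hp' : (p : ℝ) + 1 ≤ (M : ℝ) := by exact_mod_cast hp
  have hp0 : (0 : ℝ) ≤ (p : ℝ) := Nat.cast_nonneg p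
  have hω0 : 0 < ω := lt_of_le_of_lt (by positivity) h1
  have hω2π : ω < 2 * π := by
    apply lt_of_lt_of_le h2
    rw [div_le_iff₀ hM0]
    nlinarith
  set ω' : ℝ := ω - 2 * p * π / M with hω'
  have hω'0 : 0 < ω' := by rw [hω']; linarith
  have hω'2 : ω' < 2 * π / M := by
    rw [hω']
    have : ω < 2 * p * π / M + 2 * π / M := by
      apply lt_of_lt_of_le h2
      rw [← add_div, div_le_div_iff₀ hM0 hM0]
      ring_nf
      nlinarith
    linarith
  have hωeq : ω = ω' + 2 * π / M * p := by rw [hω']; field_simp; ring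
  obtain ⟨n₅, eα⟩ := hαiter p ω'
  rw [← hωeq] at eα
  obtain ⟨n₆, e₆⟩ := partii ω' hω'0 hω'2
  have hMω0 : 0 < (M : ℝ) * ω := mul_pos hM0 hω0
  obtain ⟨n₄, e₄⟩ := hmain ((M : ℝ) * ω) (by rw [abs_of_pos hMω0]; exact hMω0)
    (by rw [abs_of_pos hMω0]; nlinarith)
  rw [Real.sign_of_pos hMω0, mul_div_cancel_left₀ ω hMne, hβM ω hω0 hω2π,
    hβval ω hω0 hω2π] at e₄
  have hβeq : γ * ω / ((M : ℝ) - 1) = ((d : ℝ) + 1 / 2) * ω := by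
    rw [hγ]; field_simp
  rw [hβeq] at e₄
  have hMω' : (M : ℝ) * ω' = (M : ℝ) * ω - 2 * p * π := by
    rw [hω']; field_simp
  refine ⟨n₄ - n₅ - n₆ - d * p, ?_⟩
  push_cast
  linear_combination e₄ - eα - e₆ + ((d : ℝ) + 1 / 2) * hMω'
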